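/- For every real p with 0 < p < 7/10, the series Σ_{k=0}^∞ p^{2^k} satisfies Σ_{k=0}^∞ p^{2^k} ≤ p + (1/log 2)·log(1/(1−p)). -/

import Mathlib

/-- **Lemma (doubly exponential series).** For `0 < p < 7/10`,
`Σ_{k=0}^∞ p^{2^k} ≤ p + (1/log 2)·log(1/(1−p))`. -/
theorem double_exp_sum_le (p : ℝ) (h0 : 0 < p) (h1 : p < 7 / 10) :
    (∑' k : ℕ, p ^ (2 ^ k)) ≤ p + (1 / Real.log 2) * Real.log (1 / (1 - p)) := by
  have hp1 : p < 1 := by linarith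
  have h1p : 0 < 1 - p := by linarith
  have hlog2 : (0:ℝ) < Real.log 2 := Real.log_pos (by norm_num)
  have hp2 : p ^ 2 < 1 := by nlinarith
  have hsum : Summable (fun k : ℕ => p ^ (2 ^ k)) := by
    apply Summable.of_nonneg_of_le (fun k => by positivity) (fun k => ?_)
      (summable_geometric_of_lt_one h0.le hp1)
    exact pow_le_pow_of_le_one h0.le hp1.le (Nat.lt_two_pow_self (n := k)).le
  rw [Summable.tsum_eq_zero_add hsum]
  simp only [pow_zero, pow_one]
  gcongr
  -- tail ≤ geometric series
  have hgeo : Summable (fun k : ℕ => (p ^ 2) ^ (k + 1)) := by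
    apply Summable.comp_injective (summable_geometric_of_lt_one (by positivity) hp2)
    exact fun a b h => by omega
  have htail : (∑' k : ℕ, p ^ (2 ^ (k + 1))) ≤ ∑' k : ℕ, (p ^ 2) ^ (k + 1) := by
    apply Summable.tsum_le_tsum _ _ hgeo
    · intro k
      rw [← pow_mul]
      apply pow_le_pow_of_le_one h0.le hp1.le
      have h := Nat.lt_two_pow_self (n := k)
      calc 2 * (k + 1) ≤ 2 * 2 ^ k := by omega
        _ = 2 ^ (k + 1) := by ring
    · apply Summable.of_nonneg_of_le (fun k => by positivity) (fun k => ?_)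
        (summable_geometric_of_lt_one h0.le hp1)
      exact pow_le_pow_of_le_one h0.le hp1.le
        (le_trans (Nat.le_succ k) (Nat.lt_two_pow_self (n := k+1)).le)
  have hgval : (∑' k : ℕ, (p ^ 2) ^ (k + 1)) = p ^ 2 / (1 - p ^ 2) := by
    have : (fun k : ℕ => (p ^ 2) ^ (k + 1)) = fun k : ℕ => p ^ 2 * (p ^ 2) ^ k := by
      funext k; ring
    rw [this, tsum_mul_left, tsum_geometric_of_lt_one (by positivity) hp2]
    ring
  have hplog : p ≤ Real.log (1 / (1 - p)) := by
    rw [one_div, Real.log_inv]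
    have := Real.log_le_sub_one_of_pos h1p
    linarith
  calc (∑' k : ℕ, p ^ (2 ^ (k + 1))) ≤ p ^ 2 / (1 - p ^ 2) := by rw [← hgval]; exact htail
    _ ≤ (1 / Real.log 2) * p := by
        rw [div_le_iff₀ (by nlinarith), one_div, inv_mul_eq_div, div_mul_eq_mul_div,
          le_div_iff₀ hlog2]
        nlinarith [Real.log_two_lt_d9, mul_pos h0 hlog2]
    _ ≤ (1 / Real.log 2) * Real.log (1 / (1 - p)) := by
        apply mul_le_mul_of_nonneg_left hplog (by positivity)
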